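/- arXiv:2602.17735 — 5 statements merged into one kernel-verified Lean document; each statement's English description precedes it below -/
import Mathlib

section
/- For every integer k ≥ 2, the floor of (F_k − 1)·φ equals F_{k+1} − 2, where F_k is the k-th Fibonacci number and φ = (1+√5)/2. -/
noncomputable def goldenRatio' : ℝ := (1 + Real.sqrt 5) / 2

theorem fib_floor_identity (k : ℕ) (hk : 2 ≤ k) :
    ⌊((Nat.fib k : ℝ) - 1) * goldenRatio'⌋ = (Nat.fib (k + 1) : ℤ) - 2 := by
  have hg : goldenRatio' = Real.goldenRatio := rfl
  obtain ⟨m, rfl⟩ := Nat.exists_eq_add_of_le hk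
  have hbinet := Real.fib_succ_sub_goldenRatio_mul_fib (2 + m)
  have habs : |Real.goldenConj ^ (2 + m)| ≤ Real.goldenConj ^ 2 := by
    rw [abs_pow]
    calc |Real.goldenConj| ^ (2 + m) ≤ |Real.goldenConj| ^ 2 := by
          apply pow_le_pow_of_le_one (abs_nonneg _) _ (by omega)
          rw [abs_le]
          constructor <;> nlinarith [Real.neg_one_lt_goldenConj, Real.goldenConj_neg]
      _ = Real.goldenConj ^ 2 := sq_abs _
  have hsq : Real.goldenConj ^ 2 = 2 - Real.goldenRatio := by
    rw [Real.goldenConj_sq, ← Real.one_sub_goldenConj]; ring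
  have h1 : (|Real.goldenConj ^ (2+m)| : ℝ) ≤ 2 - Real.goldenRatio := hsq ▸ habs
  have h2 : (2 : ℝ) - Real.goldenRatio < 1/2 := by
    have := Real.one_lt_goldenRatio
    nlinarith [Real.goldenRatio_sq, Real.goldenRatio_pos]
  rw [hg, Int.floor_eq_iff]
  push_cast
  constructor
  · nlinarith [abs_le.mp h1, hbinet]
  · nlinarith [abs_le.mp h1, hbinet]
end

section
/- Define s : ℕ → ℕ by s(n) = ⌊(n−1)·φ⌋ + 2 where φ = (1+√5)/2. Then for every k ≥ 2, s(F_k) = F_{k+1}, and consequently s iterated m times on F_k equals F_{k+m} for all m ≥ 0. -/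
/-- Survivor sequence of the golden sieve on ℕ, in Beatty form:
`s n = ⌊(n-1)·φ⌋ + 2`. -/
noncomputable def sieveS (n : ℕ) : ℕ := (⌊((n : ℝ) - 1) * goldenRatio'⌋ + 2).toNat

open goldenRatio in
lemma sieveS_fib (k : ℕ) (hk : 2 ≤ k) : sieveS (Nat.fib k) = Nat.fib (k + 1) := by
  have hb := Real.fib_succ_sub_goldenRatio_mul_fib k
  have h5 : (2:ℝ) < Real.sqrt 5 := by
    rw [show (2:ℝ) = Real.sqrt 4 by
      rw [show (4:ℝ) = 2^2 by norm_num, Real.sqrt_sq (by norm_num)]]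
    exact Real.sqrt_lt_sqrt (by norm_num) (by norm_num)
  have habs : |ψ| ^ k ≤ |ψ| ^ 2 := by
    apply pow_le_pow_of_le_one (abs_nonneg _) _ hk
    rw [abs_le]
    constructor <;> nlinarith [Real.neg_one_lt_goldenConj, Real.goldenConj_neg]
  have hub : ψ ^ k ≤ ψ ^ 2 := by
    calc ψ ^ k ≤ |ψ ^ k| := le_abs_self _
    _ = |ψ| ^ k := by rw [abs_pow]
    _ ≤ |ψ| ^ 2 := habs
    _ = ψ ^ 2 := sq_abs _
  have hlb : -(ψ ^ 2) ≤ ψ ^ k := by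
    calc -(ψ^2) = -(|ψ|^2) := by rw [sq_abs]
    _ ≤ -(|ψ|^k) := by linarith
    _ = -|ψ^k| := by rw [abs_pow]
    _ ≤ ψ ^ k := neg_abs_le _
  have hsq : ψ ^ 2 = ψ + 1 := Real.goldenConj_sq
  have hpsi : ψ = (1 - Real.sqrt 5) / 2 := rfl
  have hfloor : ⌊((Nat.fib k : ℝ) - 1) * goldenRatio'⌋ = (Nat.fib (k+1) : ℤ) - 2 := by
    rw [Int.floor_eq_iff]
    have hφ : goldenRatio' = φ := rfl
    have hgold : φ = (1 + Real.sqrt 5) / 2 := rfl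
    have hx : ((Nat.fib k : ℝ) - 1) * goldenRatio' = (Nat.fib (k+1) : ℝ) - ψ ^ k - φ := by
      rw [hφ, sub_mul, one_mul]; linarith
    constructor
    · push_cast
      rw [hx]
      linarith
    · push_cast
      rw [hx]
      linarith
  rw [sieveS, hfloor]
  omega

theorem fib_invariance (k : ℕ) (hk : 2 ≤ k) :
    sieveS (Nat.fib k) = Nat.fib (k + 1) ∧
    ∀ m : ℕ, sieveS^[m] (Nat.fib k) = Nat.fib (k + m) := by
  refine ⟨sieveS_fib k hk, fun m => ?_⟩
  induction m with
  | zero => simp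
  | succ m ih =>
    rw [Function.iterate_succ_apply', ih, sieveS_fib (k+m) (by omega)]
    ring_nf
end

section
/- Define a sequence of sets as follows. Let (σ_n) and (δ_n) be strictly increasing sequences of positive integers forming a partition of ℕ (i.e., {σ_n} ⊔ {δ_n} = ℕ), and suppose δ_n = a·σ_n + n + (b−1) for all n ≥ 1, where a ≥ 2 and 0 ≤ b < a are fixed integers. Then for all n ≥ 2, δ_n − δ_{n−1} = a·(σ_n − σ_{n−1}) + 1 ≥ a + 1 ≥ 3, and consequently σ_n − σ_{n−1} ∈ {1, 2} for all n ≥ 2. -/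
theorem two_gap_property (a b : ℕ) (ha : 2 ≤ a) (hb : b < a)
    (σ δ : ℕ → ℕ)
    (hσmono : ∀ m n, 1 ≤ m → m < n → σ m < σ n)
    (hδmono : ∀ m n, 1 ≤ m → m < n → δ m < δ n)
    (hσpos : ∀ n, 1 ≤ n → 1 ≤ σ n) (hδpos : ∀ n, 1 ≤ n → 1 ≤ δ n)
    (hpart : ∀ m : ℕ, 1 ≤ m →
        ((∃ n, 1 ≤ n ∧ σ n = m) ↔ ¬ (∃ n, 1 ≤ n ∧ δ n = m)))
    (hrank : ∀ n, 1 ≤ n → (δ n : ℤ) = a * σ n + n + ((b : ℤ) - 1)) :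
    ∀ n, 2 ≤ n →
      ((δ n : ℤ) - δ (n - 1) = a * ((σ n : ℤ) - σ (n - 1)) + 1 ∧
       (a : ℤ) + 1 ≤ (δ n : ℤ) - δ (n - 1) ∧ (3 : ℤ) ≤ (a : ℤ) + 1 ∧
       ((σ n : ℤ) - σ (n - 1) = 1 ∨ (σ n : ℤ) - σ (n - 1) = 2)) := by
  have key : ∀ n, 2 ≤ n →
      (δ n : ℤ) - δ (n - 1) = a * ((σ n : ℤ) - σ (n - 1)) + 1 := by
    intro n hn
    have h1 := hrank n (by omega)
    have h2 := hrank (n - 1) (by omega)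
    have hc : ((n - 1 : ℕ) : ℤ) = (n : ℤ) - 1 := by
      have : (1 : ℕ) ≤ n := by omega
      push_cast [this]; ring
    rw [hc] at h2
    linarith [h1, h2]
  have hσgap : ∀ n, 2 ≤ n → 1 ≤ (σ n : ℤ) - σ (n - 1) := by
    intro n hn
    have := hσmono (n - 1) n (by omega) (by omega)
    omega
  intro n hn
  refine ⟨key n hn, ?_, by exact_mod_cast by omega, ?_⟩
  · have := hσgap n hn
    have hk := key n hn
    nlinarith
  · by_contra hcon
    push_neg at hcon
    have h1 := hσgap n hn
    have h3 : (σ (n - 1) : ℤ) + 3 ≤ σ n := by omega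
    -- so σ(n-1)+1 and σ(n-1)+2 are both strictly between σ(n-1) and σ n
    have noσ : ∀ m : ℕ, σ (n - 1) < m → m < σ n → ¬ (∃ k, 1 ≤ k ∧ σ k = m) := by
      rintro m hm1 hm2 ⟨k, hk, rfl⟩
      rcases lt_or_ge k n with h | h
      · rcases eq_or_lt_of_le (by omega : k ≤ n - 1) with rfl | hlt
        · omega
        · have := hσmono k (n - 1) hk hlt; omega
      · rcases eq_or_lt_of_le h with rfl | hlt
        · omega
        · have := hσmono n k (by omega) hlt; omega
    have getδ : ∀ m : ℕ, σ (n - 1) < m → m < σ n → ∃ k, 1 ≤ k ∧ δ k = m := by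
      intro m hm1 hm2
      by_contra hno
      have hm : 1 ≤ m := by have := hσpos (n - 1) (by omega); omega
      exact noσ m hm1 hm2 ((hpart m hm).mpr hno)
    obtain ⟨i, hi, hδi⟩ := getδ (σ (n - 1) + 1) (by omega) (by omega)
    obtain ⟨j, hj, hδj⟩ := getδ (σ (n - 1) + 2) (by omega) (by omega)
    have hij : i < j := by
      rcases lt_trichotomy i j with h | rfl | h
      · exact h
      · omega
      · have := hδmono j i hj h; omega
    have hjeq : j = i + 1 := by
      by_contra hne
      have h1 := hδmono i (i + 1) hi (by omega)
      have h2 := hδmono (i + 1) j (by omega) (by omega)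
      omega
    have hk2 := key (i + 1) (by omega)
    simp only [Nat.add_sub_cancel] at hk2
    have hσi := hσmono i (i + 1) hi (by omega)
    subst hjeq
    have : (δ (i + 1) : ℤ) - δ i = 1 := by omega
    rw [this] at hk2
    nlinarith
end

section
/- Let a ≥ 2, 0 ≤ b < a, and let (σ_n), (δ_n) be strictly increasing sequences partitioning ℕ with δ_n = a·σ_n + n + (b−1) for all n ≥ 1. Set c = b − 1. Then for every n ≥ 2, the integer δ_n − 1 is a survivor (i.e., belongs to {σ_k}), it is the (δ_n − n)-th survivor, and hence σ_{a·σ_n + c} = a·σ_n + n + c − 1. -/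
theorem self_referential_identity (a b : ℕ) (ha : 2 ≤ a) (hb : b < a)
    (σ δ : ℕ → ℕ)
    (hσmono : ∀ m n, 1 ≤ m → m < n → σ m < σ n)
    (hδmono : ∀ m n, 1 ≤ m → m < n → δ m < δ n)
    (hσpos : ∀ n, 1 ≤ n → 1 ≤ σ n) (hδpos : ∀ n, 1 ≤ n → 1 ≤ δ n)
    (hpart : ∀ m : ℕ, 1 ≤ m →
        ((∃ n, 1 ≤ n ∧ σ n = m) ↔ ¬ (∃ n, 1 ≤ n ∧ δ n = m)))
    (hrank : ∀ n, 1 ≤ n → (δ n : ℤ) = a * σ n + n + ((b : ℤ) - 1)) :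
    ∀ n, 2 ≤ n →
      ((∃ k, 1 ≤ k ∧ σ k = δ n - 1) ∧
       σ (δ n - n) = δ n - 1 ∧
       (σ (a * σ n + b - 1) : ℤ) = a * σ n + n + ((b : ℤ) - 1) - 1) := by
  intro n hn
  have hn1 : 1 ≤ n := by omega
  set m := n - 1 with hm
  have hm1 : 1 ≤ m := by omega
  have hmn : m + 1 = n := by omega
  -- gap between δ m and δ n is at least a + 1 ≥ 3
  have h3 : σ m < σ n := hσmono _ _ hm1 (by omega)
  have hkey : (a : ℤ) * σ m + a ≤ (a : ℤ) * σ n := by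
    have h4 : (σ m : ℤ) + 1 ≤ σ n := by exact_mod_cast h3
    nlinarith [(show (0:ℤ) ≤ (a:ℤ) by positivity)]
  have hgapZ : (δ m : ℤ) + 3 ≤ δ n := by
    have h1 := hrank m hm1
    have h2 := hrank n hn1
    have hmZ : (m : ℤ) + 1 = n := by exact_mod_cast hmn
    have haZ : (2 : ℤ) ≤ a := by exact_mod_cast ha
    linarith
  have hgap : δ m + 3 ≤ δ n := by exact_mod_cast hgapZ
  have hδm1 : 1 ≤ δ m := hδpos m hm1
  set N := δ n - 1 with hNdef
  have hN : N + 1 = δ n := by omega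
  have hNpos : 1 ≤ N := by omega
  -- N is not a δ-value
  have hnotδ : ¬ (∃ j, 1 ≤ j ∧ δ j = N) := by
    rintro ⟨j, hj1, hje⟩
    rcases lt_or_ge j n with h | h
    · have : δ j ≤ δ m := by
        rcases eq_or_lt_of_le (show j ≤ m by omega) with h' | h'
        · rw [h']
        · exact le_of_lt (hδmono j m hj1 h')
      omega
    · rcases eq_or_lt_of_le h with h' | h'
      · rw [← h'] at hje
        omega
      · have := hδmono n j hn1 h'
        omega
  obtain ⟨K, hK1, hKe⟩ := (hpart N hNpos).mpr hnotδ
  -- counting argument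
  have himg : Finset.Icc 1 N = ((Finset.Icc 1 m).image δ) ∪ ((Finset.Icc 1 K).image σ) := by
    ext x
    simp only [Finset.mem_Icc, Finset.mem_union, Finset.mem_image]
    constructor
    · rintro ⟨hx1, hxN⟩
      by_cases hd : ∃ j, 1 ≤ j ∧ δ j = x
      · left
        obtain ⟨j, hj1, hje⟩ := hd
        refine ⟨j, ⟨hj1, ?_⟩, hje⟩
        by_contra h
        push_neg at h
        have h6 : δ n ≤ δ j := by
          rcases eq_or_lt_of_le (show n ≤ j by omega) with h' | h'
          · rw [h']
          · exact le_of_lt (hδmono n j hn1 h')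
        omega
      · right
        obtain ⟨j, hj1, hje⟩ := (hpart x hx1).mpr hd
        refine ⟨j, ⟨hj1, ?_⟩, hje⟩
        by_contra h
        push_neg at h
        have h6 : σ K < σ j := hσmono K j hK1 h
        omega
    · rintro (⟨j, ⟨hj1, hjm⟩, rfl⟩ | ⟨j, ⟨hj1, hjK⟩, rfl⟩)
      · have h5 : δ j ≤ δ m := by
          rcases eq_or_lt_of_le hjm with h' | h'
          · rw [h']
          · exact le_of_lt (hδmono j m hj1 h')
        exact ⟨hδpos j hj1, by omega⟩
      · have h5 : σ j ≤ σ K := by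
          rcases eq_or_lt_of_le hjK with h' | h'
          · rw [h']
          · exact le_of_lt (hσmono j K hj1 h')
        exact ⟨hσpos j hj1, by omega⟩
  have hdisj : Disjoint ((Finset.Icc 1 m).image δ) ((Finset.Icc 1 K).image σ) := by
    rw [Finset.disjoint_left]
    rintro x hx hx'
    simp only [Finset.mem_Icc, Finset.mem_image] at hx hx'
    obtain ⟨j, ⟨hj1, _⟩, hje⟩ := hx
    obtain ⟨i, ⟨hi1, _⟩, hie⟩ := hx'
    have hx1 : 1 ≤ x := by have := hδpos j hj1; omega
    exact (hpart x hx1).mp ⟨i, hi1, hie⟩ ⟨j, hj1, hje⟩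
  have hinjδ : Set.InjOn δ (Finset.Icc 1 m) := by
    intro i hi j hj hij
    simp only [Finset.coe_Icc, Set.mem_Icc] at hi hj
    by_contra h
    rcases Nat.lt_or_ge i j with h' | h'
    · have := hδmono i j hi.1 h'; omega
    · have := hδmono j i hj.1 (by omega); omega
  have hinjσ : Set.InjOn σ (Finset.Icc 1 K) := by
    intro i hi j hj hij
    simp only [Finset.coe_Icc, Set.mem_Icc] at hi hj
    by_contra h
    rcases Nat.lt_or_ge i j with h' | h'
    · have := hσmono i j hi.1 h'; omega
    · have := hσmono j i hj.1 (by omega); omega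
  have hcard : N = m + K := by
    have := congrArg Finset.card himg
    rw [Finset.card_union_of_disjoint hdisj, Finset.card_image_of_injOn hinjδ,
      Finset.card_image_of_injOn hinjσ] at this
    simp [Nat.card_Icc] at this
    omega
  have hKval : δ n - n = K := by omega
  refine ⟨⟨K, hK1, hKe⟩, by rw [hKval]; exact hKe, ?_⟩
  -- third statement
  have hr := hrank n hn1
  have hA2 : 2 ≤ a * σ n := by
    calc 2 = 2 * 1 := by ring
    _ ≤ a * σ n := Nat.mul_le_mul ha (hσpos n hn1)
  have hAZ : ((a * σ n : ℕ) : ℤ) = (a : ℤ) * σ n := by push_cast; ring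
  rw [← hAZ] at hr ⊢
  have hidx : a * σ n + b - 1 = δ n - n := by
    generalize hA : a * σ n = A at hr hA2 ⊢
    omega
  rw [hidx, hKval, hKe]
  generalize hA : a * σ n = A at hr hA2 ⊢
  omega
end

section
/- Let (μ_n) and (λ_n) be strictly increasing sequences of positive integers partitioning ℕ, with μ_1 = 2, λ_1 = 1, and λ_n = μ_n² + (n−1) for all n ≥ 2. Suppose further that λ_n − λ_{n−1} ≥ 5 for all n ≥ 3. Then for every n ≥ 2: μ_{μ_n² − 1} = μ_n² + n − 2 and μ_{μ_n²} = λ_n + 1. -/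
open scoped Classical
open Finset

lemma card_vals_aux (f : ℕ → ℕ) (hf : ∀ a b, 1 ≤ a → a < b → f a < f b)
    (hpos : ∀ j, 1 ≤ j → 1 ≤ f j)
    (K m : ℕ) (hK : 1 ≤ K) (hfK : f K ≤ m) (hgt : ∀ j, K < j → m < f j) :
    ((Finset.Icc 1 m).filter (fun x => ∃ k, 1 ≤ k ∧ f k = x)).card = K := by
  have key : ((Finset.Icc 1 m).filter (fun x => ∃ k, 1 ≤ k ∧ f k = x))
      = (Finset.Icc 1 K).image f := by
    ext x
    simp only [Finset.mem_filter, Finset.mem_image, Finset.mem_Icc]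
    constructor
    · rintro ⟨⟨hx1, hxm⟩, k, hk1, rfl⟩
      refine ⟨k, ⟨hk1, ?_⟩, rfl⟩
      by_contra h
      exact absurd (hgt k (by omega)) (by omega)
    · rintro ⟨k, ⟨hk1, hkK⟩, rfl⟩
      have hle : f k ≤ m := by
        rcases eq_or_lt_of_le hkK with h | h
        · subst h; exact hfK
        · exact le_trans (le_of_lt (hf k K hk1 h)) hfK
      exact ⟨⟨hpos k hk1, hle⟩, k, hk1, rfl⟩
  rw [key, Finset.card_image_of_injOn, Nat.card_Icc]
  · omega
  · intro a ha b hb hab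
    simp only [Finset.coe_Icc, Set.mem_Icc] at ha hb
    by_contra hne
    rcases Nat.lt_or_ge a b with h | h
    · exact absurd hab (Nat.ne_of_lt (hf a b ha.1 h))
    · have hba : b < a := by omega
      exact absurd hab.symm (Nat.ne_of_lt (hf b a hb.1 hba))

lemma part_count_aux (μ lam : ℕ → ℕ)
    (hpart : ∀ m : ℕ, 1 ≤ m →
        ((∃ n, 1 ≤ n ∧ μ n = m) ↔ ¬ (∃ n, 1 ≤ n ∧ lam n = m))) (m : ℕ) :
    ((Finset.Icc 1 m).filter (fun x => ∃ k, 1 ≤ k ∧ μ k = x)).card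
    + ((Finset.Icc 1 m).filter (fun x => ∃ k, 1 ≤ k ∧ lam k = x)).card = m := by
  have h2 : ((Finset.Icc 1 m).filter (fun x => ∃ k, 1 ≤ k ∧ lam k = x))
      = (Finset.Icc 1 m).filter (fun x => ¬ ∃ k, 1 ≤ k ∧ μ k = x) := by
    ext x
    simp only [Finset.mem_filter, Finset.mem_Icc]
    constructor
    · rintro ⟨hx, h⟩
      exact ⟨hx, fun hμ => ((hpart x hx.1).1 hμ) h⟩
    · rintro ⟨hx, h⟩
      refine ⟨hx, ?_⟩
      by_contra hl
      exact h ((hpart x hx.1).2 hl)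
  rw [h2, Finset.card_filter_add_card_filter_not, Nat.card_Icc]
  omega

lemma value_index_aux (μ lam : ℕ → ℕ)
    (hμmono : ∀ m n, 1 ≤ m → m < n → μ m < μ n)
    (hlammono : ∀ m n, 1 ≤ m → m < n → lam m < lam n)
    (hμpos : ∀ n, 1 ≤ n → 1 ≤ μ n) (hlampos : ∀ n, 1 ≤ n → 1 ≤ lam n)
    (hpart : ∀ m : ℕ, 1 ≤ m →
        ((∃ n, 1 ≤ n ∧ μ n = m) ↔ ¬ (∃ n, 1 ≤ n ∧ lam n = m)))
    (m N : ℕ) (hN : 1 ≤ N) (hlow : lam N < m) (hhigh : m < lam (N + 1)) :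
    μ (m - N) = m := by
  have hm1 : 1 ≤ m := by have := hlampos N hN; omega
  -- m is not a lam-value
  have hnotlam : ¬ ∃ j, 1 ≤ j ∧ lam j = m := by
    rintro ⟨j, hj1, hjm⟩
    rcases Nat.lt_or_ge j (N + 1) with h | h
    · have : lam j ≤ lam N := by
        rcases eq_or_lt_of_le (Nat.lt_succ_iff.mp h) with h' | h'
        · subst h'; exact le_refl _
        · exact le_of_lt (hlammono j N hj1 h')
      omega
    · have : lam (N + 1) ≤ lam j := by
        rcases eq_or_lt_of_le h with h' | h'
        · subst h'; exact le_refl _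
        · exact le_of_lt (hlammono (N + 1) j (by omega) h')
      omega
  obtain ⟨K, hK1, hKm⟩ := (hpart m hm1).2 hnotlam
  have hcardL : ((Finset.Icc 1 m).filter (fun x => ∃ k, 1 ≤ k ∧ lam k = x)).card = N := by
    apply card_vals_aux lam hlammono hlampos N m hN (le_of_lt hlow)
    intro j hj
    calc m < lam (N + 1) := hhigh
      _ ≤ lam j := by
        rcases eq_or_lt_of_le (Nat.succ_le_of_lt hj) with h' | h'
        · rw [show N + 1 = j from h']
        · exact le_of_lt (hlammono (N + 1) j (by omega) h')
  have hcardM : ((Finset.Icc 1 m).filter (fun x => ∃ k, 1 ≤ k ∧ μ k = x)).card = K := by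
    apply card_vals_aux μ hμmono hμpos K m hK1 (le_of_eq hKm)
    intro j hj
    have := hμmono K j hK1 hj
    omega
  have hsum := part_count_aux μ lam hpart m
  rw [hcardL, hcardM] at hsum
  have : K = m - N := by omega
  rw [← this, hKm]

theorem squares_nested_identity
    (μ lam : ℕ → ℕ)
    (hμmono : ∀ m n, 1 ≤ m → m < n → μ m < μ n)
    (hlammono : ∀ m n, 1 ≤ m → m < n → lam m < lam n)
    (hμ1 : μ 1 = 2) (hlam1 : lam 1 = 1)
    (hμpos : ∀ n, 1 ≤ n → 1 ≤ μ n) (hlampos : ∀ n, 1 ≤ n → 1 ≤ lam n)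
    (hpart : ∀ m : ℕ, 1 ≤ m →
        ((∃ n, 1 ≤ n ∧ μ n = m) ↔ ¬ (∃ n, 1 ≤ n ∧ lam n = m)))
    (hrank : ∀ n, 2 ≤ n → lam n = (μ n)^2 + (n - 1))
    (hgap : ∀ n, 3 ≤ n → 5 ≤ lam n - lam (n - 1)) :
    ∀ n, 2 ≤ n →
      μ ((μ n)^2 - 1) = (μ n)^2 + n - 2 ∧ μ ((μ n)^2) = lam n + 1 := by
  intro n hn
  have hμn2 : 2 ≤ μ n := by
    have := hμmono 1 n (le_refl 1) (by omega)
    omega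
  have hq1 : 4 ≤ (μ n)^2 := by nlinarith
  have hrn : lam n = (μ n)^2 + (n - 1) := hrank n hn
  -- first part : m = lam n - 1, N = n - 1
  have h1 : μ (lam n - 1 - (n - 1)) = lam n - 1 := by
    apply value_index_aux μ lam hμmono hlammono hμpos hlampos hpart
    · omega
    · -- lam (n-1) < lam n - 1
      rcases Nat.lt_or_ge n 3 with h3 | h3
      · have hn2 : n = 2 := by omega
        subst hn2
        simp only [show (2:ℕ) - 1 = 1 from rfl, hlam1]
        omega
      · have hg := hgap n h3
        have hmono := hlammono (n - 1) n (by omega) (by omega)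
        omega
    · -- lam n - 1 < lam ((n-1) + 1)
      have : (n - 1) + 1 = n := by omega
      rw [this]
      omega
  have h2 : μ (lam n + 1 - n) = lam n + 1 := by
    apply value_index_aux μ lam hμmono hlammono hμpos hlampos hpart
    · omega
    · omega
    · -- lam n + 1 < lam (n + 1)
      have hrn1 : lam (n + 1) = (μ (n + 1))^2 + n := by
        have := hrank (n + 1) (by omega)
        simpa using this
      have hμlt : μ n < μ (n + 1) := hμmono n (n + 1) (by omega) (by omega)
      have : (μ n)^2 < (μ (n + 1))^2 := by nlinarith
      omega
  constructor
  · have e1 : lam n - 1 - (n - 1) = (μ n)^2 - 1 := by omega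
    have e2 : lam n - 1 = (μ n)^2 + n - 2 := by omega
    rw [e1, e2] at h1
    exact h1
  · have e3 : lam n + 1 - n = (μ n)^2 := by omega
    rw [e3] at h2
    exact h2
end
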